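/- Let R be a commutative ring, let r be a positive integer, and let L be a unit of R such that L^i − 1 is a unit of R for every positive integer i. Let S ⊆ ℕ^r × ℤ^r be a finite set and let c_{a,b} ∈ R for each (a,b) ∈ S. Suppose that for every n ∈ ℕ^r the element f(n) = Σ_{(a,b)∈S} c_{a,b} · n^a · L^{b·n} is torsion in R (i.e., there is a nonzero integer N, possibly depending on n, with N·f(n) = 0), where n^a = n_1^{a_1}⋯n_r^{a_r} and b·n = b_1 n_1 + ⋯ + b_r n_r. Then c_{a,b} is torsion in R for every (a,b) ∈ S. -/

import Mathlib

open Polynomial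

section PropFourOne
variable {R : Type*} [CommRing R]

lemma taylor_coeff_natDegree' {R:Type*}[CommRing R](p : R[X]) (r : R) (d : ℕ) (hd : p.natDegree ≤ d) :
    (taylor r p).coeff d = p.coeff d := by
  rw [taylor_coeff]
  have h1 : (hasseDeriv d p).natDegree ≤ 0 := le_trans (natDegree_hasseDeriv_le p d) (by omega)
  rw [Polynomial.eq_C_of_natDegree_le_zero h1, eval_C, hasseDeriv_coeff]
  simp

lemma poly_eq_zero_of_eval_nat {R:Type*}[CommRing R]
    (htf : ∀ (N : ℤ) (x : R), N ≠ 0 → N • x = 0 → x = 0)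
    (p : R[X]) (h : ∀ n : ℕ, p.eval (n:R) = 0) : p = 0 := by
  suffices H : ∀ d (p:R[X]), p.natDegree ≤ d → (∀ n:ℕ, p.eval (n:R) = 0) → p = 0 from
    H p.natDegree p le_rfl h
  intro d
  induction d using Nat.strong_induction_on with
  | _ d ih =>
  intro p hdeg h
  by_contra hp
  have h0 : p.coeff 0 = 0 := by rw [Polynomial.coeff_zero_eq_eval_zero]; simpa using h 0
  have hX : p = X * p.divX := by
    conv_lhs => rw [← X_mul_divX_add p, h0]
    simp
  have hdvx : p.divX ≠ 0 := by
    intro hz; rw [hz, mul_zero] at hX; exact hp hX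
  have hpd0 : p.natDegree ≠ 0 := by
    intro h'
    exact hp (by rw [Polynomial.eq_C_of_natDegree_eq_zero h', h0, map_zero])
  have hdlt : p.divX.natDegree < p.natDegree := by
    rw [Polynomial.natDegree_divX_eq_natDegree_tsub_one]; omega
  have hdpos : 0 < d := by
    rcases Nat.eq_zero_or_pos d with h'|h'
    · omega
    · exact h'
  have hq : taylor 1 p.divX = 0 := by
    refine ih (d-1) (by omega) _ (by rw [natDegree_taylor]; omega) ?_
    intro n
    rw [taylor_eval]
    have hev : ((n:R)+1) * p.divX.eval ((n:R)+1) = 0 := by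
      have := h (n+1); rw [hX] at this; push_cast at this
      simpa [mul_comm] using this
    refine htf (n+1) _ (by omega) ?_
    push_cast
    simpa [mul_comm] using hev
  have : p.divX = 0 := by
    have := congrArg (taylor (-1)) hq
    rwa [taylor_taylor, map_zero, neg_add_cancel, taylor_zero'] at this
  exact hdvx this

lemma unit_sub_pow {R:Type*}[CommRing R] (L : Rˣ)
    (hL : ∀ i : ℕ, 0 < i → IsUnit ((L : R) ^ i - 1))
    {b b' : ℤ} (h : b ≠ b') : IsUnit (((L^b : Rˣ) : R) - ((L^b' : Rˣ) : R)) := by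
  have key : ∀ b b' : ℤ, b' < b → IsUnit (((L^b : Rˣ) : R) - ((L^b' : Rˣ) : R)) := by
    intro b b' hlt
    have hd : (0:ℤ) < b - b' := by omega
    have h1 : ((L^b : Rˣ) : R) - ((L^b' : Rˣ) : R)
        = ((L^b' : Rˣ) : R) * ((L : R) ^ (b - b').toNat - 1) := by
      rw [mul_sub, mul_one]
      congr 1
      rw [← Units.val_pow_eq_pow_val, ← Units.val_mul, ← zpow_natCast, Int.toNat_of_nonneg (by omega), ← zpow_add]
      ring_nf
    rw [h1]
    exact (L^b').isUnit.mul (hL _ (by omega))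
  rcases lt_or_gt_of_ne h with h'|h'
  · have := (key b' b h').neg
    simpa using this
  · exact key b b' h'

open scoped Classical in
lemma one_var_poly (htf : ∀ (N : ℤ) (x : R), N ≠ 0 → N • x = 0 → x = 0)
    (L : Rˣ) (hL : ∀ i : ℕ, 0 < i → IsUnit ((L : R) ^ i - 1))
    (vanish : ∀ p : R[X], (∀ n : ℕ, p.eval (n:R) = 0) → p = 0)
    (usub : ∀ {b b' : ℤ}, b ≠ b' → IsUnit (((L^b : Rˣ) : R) - ((L^b' : Rˣ) : R))) :
    ∀ (k : ℕ) (B : Finset ℤ) (P : ℤ → R[X]),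
    (∑ b ∈ B, (if P b = 0 then 0 else (P b).natDegree + 1)) ≤ k →
    (∀ n : ℕ, ∑ b ∈ B, (P b).eval (n:R) * ((L ^ (b * (n:ℤ)) : Rˣ) : R) = 0) →
    ∀ b ∈ B, P b = 0 := by
  classical
  intro k
  induction k with
  | zero =>
    intro B P hm hf b hb
    by_contra hpb
    have : (if P b = 0 then 0 else (P b).natDegree + 1) = 0 := by
      have := Finset.sum_eq_zero_iff_of_nonneg (fun b _ => Nat.zero_le _) |>.mp (Nat.le_zero.mp hm) b hb
      exact this
    simp [hpb] at this
  | succ k ih =>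
    intro B P hm hf b hb
    by_cases hall : ∀ b ∈ B, P b = 0
    · exact hall b hb
    push_neg at hall
    obtain ⟨b0, hb0B, hb0⟩ := hall
    exfalso
    set u : ℤ → R := fun b => ((L^b : Rˣ) : R) with hu
    set P' : ℤ → R[X] := fun b => C (u b) * taylor 1 (P b) - C (u b0) * P b with hP'
    -- transformed functional equation
    have hf' : ∀ n : ℕ, ∑ b ∈ B, (P' b).eval (n:R) * ((L ^ (b * (n:ℤ)) : Rˣ) : R) = 0 := by
      intro n
      have key : ∀ b ∈ B, (P' b).eval (n:R) * ((L ^ (b * (n:ℤ)) : Rˣ) : R)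
          = (P b).eval ((n+1 : ℕ):R) * ((L ^ (b * ((n+1:ℕ):ℤ)) : Rˣ) : R)
            - u b0 * ((P b).eval (n:R) * ((L ^ (b * (n:ℤ)) : Rˣ) : R)) := by
        intro b _
        have hunit : u b * ((L ^ (b * (n:ℤ)) : Rˣ) : R) = ((L ^ (b * ((n+1:ℕ):ℤ)) : Rˣ) : R) := by
          rw [hu, ← Units.val_mul, ← zpow_add]
          congr 2
          push_cast; ring
        simp only [hP', eval_sub, eval_mul, eval_C, taylor_eval]
        have : (((n+1 : ℕ):R)) = (n:R) + 1 := by push_cast; ring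
        rw [this]
        rw [sub_mul, mul_assoc, mul_assoc, mul_left_comm (u b), hunit]
      rw [Finset.sum_congr rfl key, Finset.sum_sub_distrib, ← Finset.mul_sum, hf n, hf (n+1),
        mul_zero, sub_zero]
    -- measure decreases
    have hm' : (∑ b ∈ B, (if P' b = 0 then 0 else (P' b).natDegree + 1)) ≤ k := by
      have hlt : (∑ b ∈ B, (if P' b = 0 then 0 else (P' b).natDegree + 1))
          < ∑ b ∈ B, (if P b = 0 then 0 else (P b).natDegree + 1) := by
        apply Finset.sum_lt_sum
        · intro b _
          by_cases h0 : P b = 0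
          · simp [hP', h0]
          · by_cases h0' : P' b = 0
            · simp [h0']
            · simp only [if_neg h0, if_neg h0']
              have : (P' b).natDegree ≤ (P b).natDegree := by
                refine le_trans (natDegree_sub_le _ _) (max_le ?_ ?_)
                · exact le_trans (natDegree_C_mul_le _ _) (le_of_eq (natDegree_taylor _ _))
                · exact natDegree_C_mul_le _ _
              omega
        · refine ⟨b0, hb0B, ?_⟩
          have hfac : P' b0 = C (u b0) * (taylor 1 (P b0) - P b0) := by
            rw [hP', mul_sub]
          set D := taylor 1 (P b0) - P b0 with hD
          by_cases hD0 : D = 0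
          · simp only [hfac, hD0, mul_zero, if_pos, if_neg hb0]
            omega
          · have hdpos : (P b0).natDegree ≠ 0 := by
              intro h0
              apply hD0
              rw [hD, Polynomial.eq_C_of_natDegree_eq_zero h0, taylor_C, sub_self]
            have hDlt : D.natDegree < (P b0).natDegree := by
              have h1 : D.natDegree ≤ (P b0).natDegree := by
                refine le_trans (natDegree_sub_le _ _) (max_le (le_of_eq (natDegree_taylor _ _)) le_rfl)
              rcases lt_or_eq_of_le h1 with h|h
              · exact h
              · exfalso
                apply hD0
                have : D.coeff D.natDegree = 0 := by
                  rw [hD, Polynomial.coeff_sub, h, taylor_coeff_natDegree' _ _ _ le_rfl, sub_self]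
                rw [← leadingCoeff, leadingCoeff_eq_zero] at this
                exact this
            by_cases h0' : P' b0 = 0
            · simp only [if_pos h0', if_neg hb0]; omega
            · simp only [if_neg h0', if_neg hb0]
              have : (P' b0).natDegree ≤ D.natDegree := by
                rw [hfac]; exact natDegree_C_mul_le _ _
              omega
      omega
    have hz : ∀ b ∈ B, P' b = 0 := ih B P' hm' hf'
    -- kill b ≠ b0
    have hPz : ∀ b ∈ B, b ≠ b0 → P b = 0 := by
      intro b hbB hne
      by_contra hQ
      have h1 := hz b hbB
      have h2 : (P' b).coeff (P b).natDegree = (u b - u b0) * (P b).leadingCoeff := by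
        rw [hP']
        simp only [Polynomial.coeff_sub, Polynomial.coeff_C_mul,
          taylor_coeff_natDegree' _ _ _ le_rfl, leadingCoeff]
        ring
      rw [h1, Polynomial.coeff_zero] at h2
      have hun := usub hne
      have : (P b).leadingCoeff = 0 := by
        obtain ⟨w, hw⟩ := hun
        have := congrArg (fun x => ((w⁻¹ : Rˣ) : R) * x) h2.symm
        have hw' : (w : R) = u b - u b0 := hw
        calc (P b).leadingCoeff = ((w⁻¹ : Rˣ) : R) * ((w : R) * (P b).leadingCoeff) := by
              rw [← mul_assoc, Units.inv_mul, one_mul]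
          _ = 0 := by rw [hw', ← h2, mul_zero]
      exact hQ (leadingCoeff_eq_zero.mp this)
    -- now single term
    have hsingle : ∀ n : ℕ, (P b0).eval (n:R) * ((L ^ (b0 * (n:ℤ)) : Rˣ) : R) = 0 := by
      intro n
      have := hf n
      rw [Finset.sum_eq_single_of_mem b0 hb0B] at this
      · exact this
      · intro b hbB hne
        rw [hPz b hbB hne]; simp
    have : P b0 = 0 := by
      apply vanish
      intro n
      have h1 := hsingle n
      have := congrArg (fun x : R => x * (((L ^ (b0 * (n:ℤ)) : Rˣ)⁻¹ : Rˣ) : R)) h1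
      simpa [mul_assoc] using this
    exact hb0 this

open scoped Classical in
lemma one_var_finset (L : Rˣ)
    (vanish : ∀ p : R[X], (∀ n : ℕ, p.eval (n:R) = 0) → p = 0)
    (usub : ∀ {b b' : ℤ}, b ≠ b' → IsUnit (((L^b : Rˣ) : R) - ((L^b' : Rˣ) : R)))
    (hov : ∀ (k : ℕ) (B : Finset ℤ) (P : ℤ → R[X]),
      (∑ b ∈ B, (if P b = 0 then 0 else (P b).natDegree + 1)) ≤ k →
      (∀ n : ℕ, ∑ b ∈ B, (P b).eval (n:R) * ((L ^ (b * (n:ℤ)) : Rˣ) : R) = 0) →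
      ∀ b ∈ B, P b = 0)
    (T : Finset (ℕ × ℤ)) (g : ℕ × ℤ → R)
    (hf : ∀ m : ℕ, ∑ p ∈ T, g p * (m:R)^p.1 * ((L ^ (p.2 * (m:ℤ)) : Rˣ) : R) = 0) :
    ∀ p ∈ T, g p = 0 := by
  classical
  set B : Finset ℤ := T.image Prod.snd with hB
  set P : ℤ → R[X] := fun β => ∑ p ∈ T.filter (fun q => q.2 = β), C (g p) * X^p.1 with hP
  have hfb : ∀ n : ℕ, ∑ b ∈ B, (P b).eval (n:R) * ((L ^ (b * (n:ℤ)) : Rˣ) : R) = 0 := by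
    intro n
    have h1 : ∀ b ∈ B, (P b).eval (n:R) * ((L ^ (b * (n:ℤ)) : Rˣ) : R)
        = ∑ p ∈ T.filter (fun q => q.2 = b), g p * (n:R)^p.1 * ((L ^ (p.2 * (n:ℤ)) : Rˣ) : R) := by
      intro b _
      rw [hP, eval_finset_sum, Finset.sum_mul]
      apply Finset.sum_congr rfl
      intro p hp
      have hp2 : p.2 = b := (Finset.mem_filter.mp hp).2
      rw [hp2]
      simp [mul_assoc]
    rw [Finset.sum_congr rfl h1,
      Finset.sum_fiberwise_of_maps_to (fun p hp => Finset.mem_image_of_mem Prod.snd hp)]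
    exact hf n
  have hz : ∀ b ∈ B, P b = 0 := hov _ B P le_rfl hfb
  intro p hp
  have hmem : p.2 ∈ B := Finset.mem_image_of_mem Prod.snd hp
  have h1 : (P p.2).coeff p.1 = g p := by
    rw [hP]
    rw [Polynomial.finset_sum_coeff]
    have hstep : ∑ q ∈ T.filter (fun q => q.2 = p.2), (C (g q) * X ^ q.1).coeff p.1
        = (C (g p) * X ^ p.1).coeff p.1 := by
      have hpf : p ∈ T.filter (fun q => q.2 = p.2) := Finset.mem_filter.mpr ⟨hp, rfl⟩
      refine Finset.sum_eq_single_of_mem p hpf ?_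
      intro q hq hne
      have hq2 : q.2 = p.2 := (Finset.mem_filter.mp hq).2
      have hq1 : q.1 ≠ p.1 := by
        intro h'; exact hne (Prod.ext h' hq2)
      rw [coeff_C_mul, coeff_X_pow, if_neg (fun h : p.1 = q.1 => hq1 h.symm), mul_zero]
    rw [hstep]
    simp
  rw [hz p.2 hmem] at h1
  simpa using h1.symm

lemma snoc_eq_self {M : Type*} {r : ℕ} (p : Fin (r+1) → M) {α : M} (h : p (Fin.last r) = α) :
    Fin.snoc (fun i : Fin r => p i.castSucc) α = p := by
  subst h
  exact Fin.snoc_init_self p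

lemma core_multi (L : Rˣ)
    (honevar : ∀ (T : Finset (ℕ × ℤ)) (g : ℕ × ℤ → R),
      (∀ m : ℕ, ∑ p ∈ T, g p * (m:R)^p.1 * ((L ^ (p.2 * (m:ℤ)) : Rˣ) : R) = 0) →
      ∀ p ∈ T, g p = 0) :
    ∀ (r : ℕ) (S : Finset ((Fin r → ℕ) × (Fin r → ℤ))) (c : (Fin r → ℕ) × (Fin r → ℤ) → R),
    (∀ n : Fin r → ℕ, ∑ ab ∈ S, c ab * (∏ i, (n i : R) ^ ab.1 i) *
        ((L ^ (∑ i, ab.2 i * (n i : ℤ)) : Rˣ) : R) = 0) →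
    ∀ ab ∈ S, c ab = 0 := by
  classical
  intro r
  induction r with
  | zero =>
    intro S c hf ab hab
    have h0 := hf (fun i => 0)
    have hsum : ∑ p ∈ S, c p = 0 := by
      simpa using h0
    have : ∑ p ∈ S, c p = c ab := by
      apply Finset.sum_eq_single_of_mem ab hab
      intro q hq hne
      exact absurd (Subsingleton.elim q ab) hne
    rw [this] at hsum
    exact hsum
  | succ r ih =>
    intro S c hf ab hab
    set lst := Fin.last r with hlst
    set φ : ((Fin (r+1) → ℕ) × (Fin (r+1) → ℤ)) → ℕ × ℤ :=
      fun p => (p.1 lst, p.2 lst) with hφ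
    set α := ab.1 lst with hα
    set β := ab.2 lst with hβ
    -- step 1 : one-variable in the last coordinate
    have step1 : ∀ n' : Fin r → ℕ,
        ∑ p ∈ S.filter (fun p => φ p = (α, β)),
          c p * (∏ i : Fin r, (n' i : R) ^ p.1 i.castSucc) *
            ((L ^ (∑ i : Fin r, p.2 i.castSucc * (n' i : ℤ)) : Rˣ) : R) = 0 := by
      intro n'
      set T : Finset (ℕ × ℤ) := S.image φ with hT
      set g : ℕ × ℤ → R := fun q =>
        ∑ p ∈ S.filter (fun p => φ p = q),
          c p * (∏ i : Fin r, (n' i : R) ^ p.1 i.castSucc) *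
            ((L ^ (∑ i : Fin r, p.2 i.castSucc * (n' i : ℤ)) : Rˣ) : R) with hg
      have hg0 : ∀ q ∈ T, g q = 0 := by
        apply honevar
        intro m
        have h1 : ∀ q ∈ T, g q * (m:R)^q.1 * ((L ^ (q.2 * (m:ℤ)) : Rˣ) : R)
            = ∑ p ∈ S.filter (fun p => φ p = q),
                c p * (∏ i : Fin (r+1), ((Fin.snoc n' m : Fin (r+1) → ℕ) i : R) ^ p.1 i) *
                  ((L ^ (∑ i : Fin (r+1), p.2 i * ((Fin.snoc n' m : Fin (r+1) → ℕ) i : ℤ)) : Rˣ) : R) := by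
          intro q _
          rw [hg, Finset.sum_mul, Finset.sum_mul]
          apply Finset.sum_congr rfl
          intro p hp
          have hpq : φ p = q := (Finset.mem_filter.mp hp).2
          have hq1 : q.1 = p.1 lst := by rw [← hpq]
          have hq2 : q.2 = p.2 lst := by rw [← hpq]
          have hprod : (∏ i : Fin (r+1), ((Fin.snoc n' m : Fin (r+1) → ℕ) i : R) ^ p.1 i)
              = (∏ i : Fin r, (n' i : R) ^ p.1 i.castSucc) * (m:R) ^ p.1 lst := by
            rw [Fin.prod_univ_castSucc]
            congr 1
            · apply Finset.prod_congr rfl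
              intro i _
              rw [Fin.snoc_castSucc]
            · rw [hlst, Fin.snoc_last]
          have hsum : (∑ i : Fin (r+1), p.2 i * ((Fin.snoc n' m : Fin (r+1) → ℕ) i : ℤ))
              = (∑ i : Fin r, p.2 i.castSucc * (n' i : ℤ)) + p.2 lst * (m:ℤ) := by
            rw [Fin.sum_univ_castSucc]
            congr 1
            · apply Finset.sum_congr rfl
              intro i _
              rw [Fin.snoc_castSucc]
            · rw [hlst, Fin.snoc_last]
          rw [hprod, hsum, hq1, hq2, zpow_add, Units.val_mul]
          ring
        rw [Finset.sum_congr rfl h1,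
          Finset.sum_fiberwise_of_maps_to (fun p hp => Finset.mem_image_of_mem φ hp)]
        exact hf (Fin.snoc n' m)
      have habT : (α, β) ∈ T := by
        rw [hT, hα, hβ]
        exact Finset.mem_image_of_mem φ hab
      exact hg0 (α, β) habT
    -- step 2 : induction on the remaining r coordinates
    set ι : ((Fin (r+1) → ℕ) × (Fin (r+1) → ℤ)) → ((Fin r → ℕ) × (Fin r → ℤ)) :=
      fun p => (fun i => p.1 i.castSucc, fun i => p.2 i.castSucc) with hι
    set S' := S.filter (fun p => φ p = (α, β)) with hS'
    have hrec : ∀ p ∈ S', (Fin.snoc (ι p).1 α, Fin.snoc (ι p).2 β) = p := by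
      intro p hp
      have hpq : φ p = (α, β) := (Finset.mem_filter.mp hp).2
      have h1 : p.1 lst = α := by
        have := congrArg Prod.fst hpq; simpa using this
      have h2 : p.2 lst = β := by
        have := congrArg Prod.snd hpq; simpa using this
      exact Prod.ext (snoc_eq_self p.1 h1) (snoc_eq_self p.2 h2)
    have hinj : Set.InjOn ι S' := by
      intro p hp p' hp' heq
      rw [← hrec p (by simpa using hp), ← hrec p' (by simpa using hp'), heq]
    set c'' : ((Fin r → ℕ) × (Fin r → ℤ)) → R :=
      fun q => c (Fin.snoc q.1 α, Fin.snoc q.2 β) with hc''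
    have hf'' : ∀ n' : Fin r → ℕ,
        ∑ q ∈ S'.image ι, c'' q * (∏ i, (n' i : R) ^ q.1 i) *
          ((L ^ (∑ i, q.2 i * (n' i : ℤ)) : Rˣ) : R) = 0 := by
      intro n'
      rw [Finset.sum_image (fun p hp p' hp' h => hinj hp hp' h)]
      rw [← step1 n']
      apply Finset.sum_congr rfl
      intro p hp
      have := hrec p hp
      rw [hc'']
      simp only [hι]
      rw [this]
    have hIH := ih (S'.image ι) c'' hf''
    have habS' : ab ∈ S' := by
      rw [hS']
      refine Finset.mem_filter.mpr ⟨hab, ?_⟩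
      rw [hφ, hα, hβ]
    have := hIH (ι ab) (Finset.mem_image_of_mem ι habS')
    rw [hc''] at this
    simp only at this
    rw [hrec ab habS'] at this
    exact this


end PropFourOne

def torIdeal (R : Type*) [CommRing R] : Ideal R where
  carrier := {x | ∃ N : ℤ, N ≠ 0 ∧ N • x = 0}
  add_mem' := by
    rintro a b ⟨N, hN, hNa⟩ ⟨M, hM, hMb⟩
    refine ⟨N * M, mul_ne_zero hN hM, ?_⟩
    rw [smul_add, mul_smul N M b, hMb, smul_zero, add_zero, mul_comm, mul_smul, hNa, smul_zero]
  zero_mem' := ⟨1, one_ne_zero, smul_zero 1⟩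
  smul_mem' := by
    rintro c x ⟨N, hN, h⟩
    exact ⟨N, hN, by rw [smul_comm, h, smul_zero]⟩

lemma mem_torIdeal_iff {R : Type*} [CommRing R] (x : R) :
    x ∈ torIdeal R ↔ ∃ N : ℤ, N ≠ 0 ∧ N • x = 0 := Iff.rfl

lemma torfree_quot {R : Type*} [CommRing R] :
    ∀ (N : ℤ) (x : R ⧸ torIdeal R), N ≠ 0 → N • x = 0 → x = 0 := by
  intro N x hN hx
  obtain ⟨y, rfl⟩ := Ideal.Quotient.mk_surjective x
  have h1 : Ideal.Quotient.mk (torIdeal R) (N • y) = 0 := by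
    rw [map_zsmul]; exact hx
  rw [Ideal.Quotient.eq_zero_iff_mem] at h1
  obtain ⟨M, hM, hMy⟩ := h1
  rw [Ideal.Quotient.eq_zero_iff_mem]
  exact ⟨M * N, mul_ne_zero hM hN, by rw [mul_smul]; exact hMy⟩


/-- Several-variable torsion version of Proposition 4.1(2): if
`f(n) = ∑ (a,b) ∈ S, c (a,b) * n^a * L^(b·n)` is torsion in `R` for every `n ∈ ℕ^r`,
then every coefficient `c (a,b)` is torsion. -/
theorem stmt3 {R : Type*} [CommRing R] (r : ℕ) (hr : 0 < r) (L : Rˣ)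
    (hL : ∀ i : ℕ, 0 < i → IsUnit ((L : R) ^ i - 1))
    (S : Finset ((Fin r → ℕ) × (Fin r → ℤ))) (c : (Fin r → ℕ) × (Fin r → ℤ) → R)
    (hf : ∀ n : Fin r → ℕ, ∃ N : ℤ, N ≠ 0 ∧
      N • (∑ ab ∈ S, c ab * (∏ i, (n i : R) ^ ab.1 i) *
        ((L ^ (∑ i, ab.2 i * (n i : ℤ)) : Rˣ) : R)) = 0) :
    ∀ ab ∈ S, ∃ N : ℤ, N ≠ 0 ∧ N • c ab = 0 := by
  classical
  intro ab hab
  set I := torIdeal R with hI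
  set π : R →+* R ⧸ I := Ideal.Quotient.mk I with hπ
  set L' : (R ⧸ I)ˣ := Units.map (π : R →* R ⧸ I) L with hL'def
  have hcoeL : ((L' : R ⧸ I)) = π (L : R) := rfl
  have hL' : ∀ i : ℕ, 0 < i → IsUnit ((L' : R ⧸ I) ^ i - 1) := by
    intro i hi
    have h1 : ((L' : R ⧸ I) ^ i - 1) = π ((L : R) ^ i - 1) := by
      rw [hcoeL, map_sub, map_pow, map_one]
    rw [h1]
    exact (hL i hi).map π
  have htf := torfree_quot (R := R)
  have vanish : ∀ p : Polynomial (R ⧸ I), (∀ n : ℕ, p.eval (n : R ⧸ I) = 0) → p = 0 :=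
    fun p hp => poly_eq_zero_of_eval_nat htf p hp
  have usub : ∀ {b b' : ℤ}, b ≠ b' →
      IsUnit (((L'^b : (R ⧸ I)ˣ) : R ⧸ I) - ((L'^b' : (R ⧸ I)ˣ) : R ⧸ I)) :=
    fun h => unit_sub_pow L' hL' h
  have hov := one_var_poly htf L' hL' vanish (fun {b b'} h => usub h)
  have honevar := one_var_finset L' vanish (fun {b b'} h => usub h) hov
  have hzL : ∀ z : ℤ, ((L'^z : (R ⧸ I)ˣ) : R ⧸ I) = π ((L^z : Rˣ) : R) := by
    intro z
    have h1 : L'^z = Units.map (π : R →* R ⧸ I) (L^z) := by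
      rw [hL'def, ← map_zpow]
    rw [h1]
    rfl
  have hf' : ∀ n : Fin r → ℕ, ∑ ab ∈ S, (π (c ab)) * (∏ i, ((n i : R ⧸ I)) ^ ab.1 i) *
      ((L' ^ (∑ i, ab.2 i * (n i : ℤ)) : (R ⧸ I)ˣ) : R ⧸ I) = 0 := by
    intro n
    obtain ⟨N, hN, hNf⟩ := hf n
    have hmem : (∑ ab ∈ S, c ab * (∏ i, (n i : R) ^ ab.1 i) *
        ((L ^ (∑ i, ab.2 i * (n i : ℤ)) : Rˣ) : R)) ∈ I := ⟨N, hN, hNf⟩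
    have h0 : π (∑ ab ∈ S, c ab * (∏ i, (n i : R) ^ ab.1 i) *
        ((L ^ (∑ i, ab.2 i * (n i : ℤ)) : Rˣ) : R)) = 0 :=
      (Ideal.Quotient.eq_zero_iff_mem).mpr hmem
    rw [map_sum] at h0
    rw [← h0]
    apply Finset.sum_congr rfl
    intro p _
    have hprodeq : (∏ i, ((n i : R ⧸ I)) ^ p.1 i) = ∏ i, π ((n i : R) ^ p.1 i) := by
      apply Finset.prod_congr rfl
      intro i _
      rw [map_pow, map_natCast]
    rw [map_mul, map_mul, hzL, map_prod, ← hprodeq]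
  have hq := core_multi L' honevar r S (fun p => π (c p)) hf' ab hab
  have : c ab ∈ I := (Ideal.Quotient.eq_zero_iff_mem).mp hq
  exact this
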